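/- Let T : ℝ₊^N → ℝ₊₊^N be a positive concave mapping and let M be its lower bounding matrix. If T has a fixed point, i.e., there exists x ∈ ℝ₊^N with T(x) = x, then the spectral radius of M is strictly smaller than one: ρ(M) < 1. -/

import Mathlib

open Matrix Filter Topology

noncomputable section

/-- `g` is a supergradient of `f` at `x`: the supergradient inequality holds for all
points `y` in the nonnegative orthant. -/
def IsSupergrad {N : ℕ} (f : (Fin N → ℝ) → ℝ) (x g : Fin N → ℝ) : Prop :=
  ∀ y : Fin N → ℝ, 0 ≤ y → f y ≤ f x + ∑ i, g i * (y i - x i)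

/-- `M` is the lower bounding matrix of the positive concave mapping with components `f i`:
`M i k` is the infimum of the `k`-th components of all supergradients of `f i` at points of
the nonnegative orthant. -/
def IsLBM {N : ℕ} (f : Fin N → (Fin N → ℝ) → ℝ) (M : Matrix (Fin N) (Fin N) ℝ) : Prop :=
  ∀ i k, M i k =
    sInf {t : ℝ | ∃ x : Fin N → ℝ, 0 ≤ x ∧ ∃ g : Fin N → ℝ, IsSupergrad (f i) x g ∧ g k = t}

/-- The spectral radius of a real matrix: the supremum of the moduli of its complex
eigenvalues. -/
def specRad {N : ℕ} (M : Matrix (Fin N) (Fin N) ℝ) : ENNReal :=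
  spectralRadius ℂ (M.map (algebraMap ℝ ℂ))

lemma supergrad_nonneg {N : ℕ} {f : (Fin N → ℝ) → ℝ}
    (hpos : ∀ x : Fin N → ℝ, 0 ≤ x → 0 < f x) {z g : Fin N → ℝ} (hz : 0 ≤ z)
    (hg : IsSupergrad f z g) (k : Fin N) : 0 ≤ g k := by
  by_contra h
  push_neg at h
  set t : ℝ := (2 * f z) / (-(g k)) with ht
  have hfz : 0 < f z := hpos z hz
  have htpos : 0 < t := div_pos (by linarith) (neg_pos.2 h)
  have hy : (0 : Fin N → ℝ) ≤ z + t • (Pi.single k 1 : Fin N → ℝ) := by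
    intro i
    simp only [Pi.zero_apply, Pi.add_apply, Pi.smul_apply, smul_eq_mul]
    have h0 : (0:ℝ) ≤ (Pi.single k 1 : Fin N → ℝ) i := by
      rcases eq_or_ne i k with rfl | hik
      · simp
      · simp [Pi.single_eq_of_ne hik]
    have hzi : (0:ℝ) ≤ z i := hz i
    exact add_nonneg hzi (mul_nonneg htpos.le h0)
  have hineq := hg _ hy
  have hsum : ∑ i, g i * ((z + t • (Pi.single k 1 : Fin N → ℝ)) i - z i) = g k * t := by
    have heq : ∀ i, g i * ((z + t • (Pi.single k 1 : Fin N → ℝ)) i - z i)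
        = (if i = k then g k * t else 0) := by
      intro i
      rcases eq_or_ne i k with rfl | hik
      · simp [mul_comm]
      · simp [Pi.single_eq_of_ne hik, hik]
    rw [Finset.sum_congr rfl fun i _ => heq i]
    simp
  rw [hsum] at hineq
  have hgkt : g k * t = -(2 * f z) := by
    have hgk : -g k ≠ 0 := ne_of_gt (neg_pos.2 h)
    rw [ht, mul_div_assoc', div_eq_iff hgk]
    ring
  have := hpos _ hy
  rw [hgkt] at hineq
  linarith

lemma exists_supergrad {N : ℕ} {f : (Fin N → ℝ) → ℝ}
    (hconc : ConcaveOn ℝ {x : Fin N → ℝ | 0 ≤ x} f)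
    (hpos : ∀ x : Fin N → ℝ, 0 ≤ x → 0 < f x)
    {x : Fin N → ℝ} (hx : ∀ k, 0 < x k) :
    ∃ g : Fin N → ℝ, IsSupergrad f x g := by
  classical
  set C : Set ((Fin N → ℝ) × ℝ) := {p | 0 ≤ p.1 ∧ p.2 ≤ f p.1} with hCdef
  have hCconv : Convex ℝ C := by
    rintro ⟨p, s⟩ ⟨hp, hps⟩ ⟨q, t⟩ ⟨hq, hqt⟩ a b ha hb hab
    refine ⟨?_, ?_⟩
    · exact add_nonneg (smul_nonneg ha hp) (smul_nonneg hb hq)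
    · show a * s + b * t ≤ f (a • p + b • q)
      calc a * s + b * t ≤ a * f p + b * f q := by
            have h1 := mul_le_mul_of_nonneg_left hps ha
            have h2 := mul_le_mul_of_nonneg_left hqt hb
            linarith
        _ ≤ f (a • p + b • q) := hconc.2 hp hq ha hb hab
  set U : Set ((Fin N → ℝ) × ℝ) := {p | (∀ k, 0 < p.1 k) ∧ p.2 < 0} with hUdef
  have hUopen : IsOpen U := by
    have h1 : IsOpen {p : (Fin N → ℝ) × ℝ | ∀ k, 0 < p.1 k} := by
      have heq : {p : (Fin N → ℝ) × ℝ | ∀ k, 0 < p.1 k}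
          = ⋂ k, (fun p : (Fin N → ℝ) × ℝ => p.1 k) ⁻¹' Set.Ioi 0 := by
        ext p; simp [Set.mem_iInter]
      rw [heq]
      exact isOpen_iInter_of_finite fun k =>
        isOpen_Ioi.preimage ((continuous_apply k).comp continuous_fst)
    have h2 : IsOpen {p : (Fin N → ℝ) × ℝ | p.2 < 0} := isOpen_Iio.preimage continuous_snd
    have heq : U = {p : (Fin N → ℝ) × ℝ | ∀ k, 0 < p.1 k} ∩ {p | p.2 < 0} := by
      ext p; simp [hUdef, Set.mem_setOf_eq, Set.mem_inter_iff]
    rw [heq]; exact h1.inter h2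
  have hUC : U ⊆ C := by
    rintro p ⟨hp1, hp2⟩
    exact ⟨fun k => (hp1 k).le, hp2.le.trans (hpos p.1 fun k => (hp1 k).le).le⟩
  have hu_int : ((x, (-1 : ℝ)) : (Fin N → ℝ) × ℝ) ∈ interior C :=
    interior_maximal hUC hUopen ⟨hx, by norm_num⟩
  have hbnot : ((x, f x) : (Fin N → ℝ) × ℝ) ∉ interior C := by
    intro hmem
    rcases Metric.isOpen_iff.1 isOpen_interior _ hmem with ⟨ε, hε, hball⟩
    have hmem2 : ((x, f x + ε/2) : (Fin N → ℝ) × ℝ) ∈ C := by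
      apply interior_subset (hball ?_)
      rw [Metric.mem_ball]
      have hd : dist ((x, f x + ε/2) : (Fin N → ℝ) × ℝ) (x, f x) = ε/2 := by
        rw [Prod.dist_eq]
        have h1 : dist x x = 0 := dist_self x
        have h2 : dist (f x + ε/2) (f x) = ε/2 := by
          rw [Real.dist_eq, add_sub_cancel_left]
          exact abs_of_pos (by linarith)
        rw [h1, h2, max_eq_right (by linarith)]
      rw [hd]; linarith
    have h3 : f x + ε/2 ≤ f x := hmem2.2
    linarith
  obtain ⟨L, hL⟩ := geometric_hahn_banach_open_point hCconv.interior isOpen_interior hbnot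
  have hle : ∀ a ∈ C, L a ≤ L (x, f x) := by
    intro a ha
    have tend : Tendsto (fun t : ℝ => L (a + t • (((x, (-1:ℝ)) : (Fin N → ℝ) × ℝ) - a)))
        (𝓝[>] 0) (𝓝 (L a)) := by
      have hcont : Continuous (fun t : ℝ => L (a + t • (((x, (-1:ℝ)) : (Fin N → ℝ) × ℝ) - a))) :=
        L.continuous.comp (continuous_const.add (continuous_id.smul continuous_const))
      have h0 := hcont.tendsto 0
      simp only [zero_smul, add_zero] at h0
      exact h0.mono_left nhdsWithin_le_nhds
    have hev : ∀ᶠ t in 𝓝[>] (0:ℝ),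
        L (a + t • (((x, (-1:ℝ)) : (Fin N → ℝ) × ℝ) - a)) ≤ L (x, f x) := by
      filter_upwards [Ioc_mem_nhdsGT_of_mem (Set.mem_Ico.2 ⟨le_refl (0:ℝ), one_pos⟩)] with t ht
      exact (hL _ (hCconv.add_smul_sub_mem_interior ha hu_int ht)).le
    exact le_of_tendsto tend hev
  set β : ℝ := L (0, 1) with hβdef
  set ℓ : (Fin N → ℝ) →L[ℝ] ℝ := L.comp (ContinuousLinearMap.inl ℝ (Fin N → ℝ) ℝ) with hℓdef
  have hL_split : ∀ (y : Fin N → ℝ) (t : ℝ), L (y, t) = ℓ y + t * β := by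
    intro y t
    have h1 : ((y, t) : (Fin N → ℝ) × ℝ) = (y, (0:ℝ)) + t • ((0 : Fin N → ℝ), (1:ℝ)) := by
      simp [Prod.ext_iff]
    rw [h1, map_add, L.map_smul, smul_eq_mul]
    rfl
  have hβ0 : 0 ≤ β := by
    have hmem : ((x, f x - 1) : (Fin N → ℝ) × ℝ) ∈ C :=
      ⟨fun k => (hx k).le, by show f x - 1 ≤ f x; linarith⟩
    have h1 : L (x, f x - 1) ≤ L (x, f x) := hle _ hmem
    rw [hL_split, hL_split] at h1
    linarith
  have hβpos : 0 < β := by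
    rcases hβ0.lt_or_eq with h | h
    · exact h
    · exfalso
      have h1 : L (x, (-1:ℝ)) < L (x, f x) := hL _ hu_int
      rw [hL_split, hL_split, ← h] at h1
      linarith
  have hl : ∀ w : Fin N → ℝ, ℓ w = ∑ k, w k * ℓ (Pi.single k 1) := by
    intro w
    have hw : w = ∑ k, w k • (Pi.single k 1 : Fin N → ℝ) := by
      funext j
      rw [Finset.sum_apply]
      simp [Pi.single_apply]
    conv_lhs => rw [hw]
    rw [map_sum]
    refine Finset.sum_congr rfl fun k _ => ?_
    rw [ℓ.map_smul, smul_eq_mul]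
  refine ⟨fun k => -(ℓ (Pi.single k 1)) / β, ?_⟩
  intro y hy
  have h1 : L (y, f y) ≤ L (x, f x) := hle _ ⟨hy, le_refl _⟩
  rw [hL_split, hL_split, hl y, hl x] at h1
  have hsum : ∑ k, (-(ℓ (Pi.single k 1)) / β) * (y k - x k)
      = ((∑ k, x k * ℓ (Pi.single k 1)) - ∑ k, y k * ℓ (Pi.single k 1)) / β := by
    rw [← Finset.sum_sub_distrib, Finset.sum_div]
    refine Finset.sum_congr rfl fun k _ => ?_
    field_simp
    ring
  show f y ≤ f x + ∑ k, (-(ℓ (Pi.single k 1)) / β) * (y k - x k)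
  rw [hsum]
  have h2 : (f y - f x) * β
      ≤ (∑ k, x k * ℓ (Pi.single k 1)) - ∑ k, y k * ℓ (Pi.single k 1) := by nlinarith [h1]
  have h3 : f y - f x
      ≤ ((∑ k, x k * ℓ (Pi.single k 1)) - ∑ k, y k * ℓ (Pi.single k 1)) / β := by
    rw [le_div_iff₀ hβpos]; exact h2
  linarith

/-- If a positive concave mapping has a fixed point, then the spectral radius of its lower
bounding matrix is strictly smaller than one. -/
theorem specRad_lt_one_of_fixed_point {N : ℕ} (f : Fin N → (Fin N → ℝ) → ℝ)
    (hconc : ∀ i, ConcaveOn ℝ {x : Fin N → ℝ | 0 ≤ x} (f i))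
    (husc : ∀ i, UpperSemicontinuousOn (f i) {x : Fin N → ℝ | 0 ≤ x})
    (hpos : ∀ i, ∀ x : Fin N → ℝ, 0 ≤ x → 0 < f i x)
    (M : Matrix (Fin N) (Fin N) ℝ) (hM : IsLBM f M)
    (x : Fin N → ℝ) (hx : 0 ≤ x) (hfix : (fun i => f i x) = x) :
    specRad M < 1 := by
  classical
  have hxpos : ∀ k, 0 < x k := by
    intro k
    have h := hpos k x hx
    rwa [congrFun hfix k] at h
  have hsg : ∀ i, ∃ g, IsSupergrad (f i) x g := fun i =>
    exists_supergrad (hconc i) (hpos i) hxpos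
  choose g hg using hsg
  have hMle : ∀ i k, M i k ≤ g i k := by
    intro i k
    rw [hM i k]
    apply csInf_le
    · refine ⟨0, ?_⟩
      rintro t ⟨z, hz, g', hg', rfl⟩
      exact supergrad_nonneg (hpos i) hz hg' k
    · exact ⟨x, hx, g i, hg i, rfl⟩
  have hM0 : ∀ i k, 0 ≤ M i k := by
    intro i k
    rw [hM i k]
    refine le_csInf ⟨g i k, x, hx, g i, hg i, rfl⟩ ?_
    rintro t ⟨z, hz, g', hg', rfl⟩
    exact supergrad_nonneg (hpos i) hz hg' k
  have hrow : ∀ i, ∑ k, M i k * x k < x i := by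
    intro i
    have h1 : ∑ k, M i k * x k ≤ ∑ k, g i k * x k :=
      Finset.sum_le_sum fun k _ => mul_le_mul_of_nonneg_right (hMle i k) (hxpos k).le
    have h2 := hg i 0 (le_refl 0)
    have h0 : 0 < f i 0 := hpos i 0 (le_refl 0)
    have hfx : f i x = x i := congrFun hfix i
    have h3 : ∑ k, g i k * ((0 : Fin N → ℝ) k - x k) = -∑ k, g i k * x k := by
      rw [← Finset.sum_neg_distrib]
      refine Finset.sum_congr rfl fun k _ => ?_
      simp
    rw [h3] at h2
    linarith
  cases isEmpty_or_nonempty (Fin N) with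
  | inl hempty =>
    have hspec : spectrum ℂ (M.map (algebraMap ℝ ℂ)) = ∅ := by
      ext z
      simp [spectrum.mem_iff, isUnit_of_subsingleton]
    rw [specRad, spectralRadius, hspec]
    simp
  | inr hne =>
    set c : ℝ := Finset.univ.sup' Finset.univ_nonempty
      (fun i => (∑ k, M i k * x k) / x i) with hcdef
    have hc1 : c < 1 := by
      rw [Finset.sup'_lt_iff]
      intro i _
      rw [div_lt_one (hxpos i)]
      exact hrow i
    have hcx : ∀ i, ∑ k, M i k * x k ≤ c * x i := by
      intro i
      have h := Finset.le_sup' (fun i => (∑ k, M i k * x k) / x i) (Finset.mem_univ i)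
      rw [div_le_iff₀ (hxpos i)] at h
      exact h
    have key : ∀ z ∈ spectrum ℂ (M.map (algebraMap ℝ ℂ)), ‖z‖ ≤ c := by
      intro z hz
      rw [← AlgEquiv.spectrum_eq
        (Matrix.toLinAlgEquiv' : Matrix (Fin N) (Fin N) ℂ ≃ₐ[ℂ] _)] at hz
      have hev : Module.End.HasEigenvalue (Matrix.toLinAlgEquiv' (M.map (algebraMap ℝ ℂ))) z :=
        Module.End.HasEigenvalue.of_mem_spectrum hz
      obtain ⟨v, hv⟩ := hev.exists_hasEigenvector
      have hvz : ∀ i, (∑ k, (M i k : ℂ) * v k) = z * v i := by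
        intro i
        have h := congrFun (Module.End.mem_eigenspace_iff.1 hv.1) i
        rw [Matrix.toLinAlgEquiv'_apply] at h
        simpa [Matrix.mulVec, dotProduct, Matrix.map_apply, Complex.coe_algebraMap]
          using h
      obtain ⟨i0, -, hi0⟩ := Finset.exists_max_image Finset.univ
        (fun j => ‖v j‖ / x j) Finset.univ_nonempty
      set r : ℝ := ‖v i0‖ / x i0 with hrdef
      have hvk : ∀ k, ‖v k‖ ≤ r * x k := by
        intro k
        have h := hi0 k (Finset.mem_univ k)
        rw [div_le_iff₀ (hxpos k)] at h
        simpa [hrdef] using h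
      have hrpos : 0 < ‖v i0‖ := by
        obtain ⟨k0, hk0⟩ := Function.ne_iff.1 hv.2
        have h1 : 0 < ‖v k0‖ := by
          simpa using norm_pos_iff.2 hk0
        have h2 : 0 < ‖v k0‖ / x k0 := div_pos h1 (hxpos k0)
        have h3 := hi0 k0 (Finset.mem_univ k0)
        have h4 : 0 < r := lt_of_lt_of_le h2 h3
        have h6 := mul_pos h4 (hxpos i0)
        have h5 : ‖v i0‖ = r * x i0 := by rw [hrdef, div_mul_cancel₀ _ (hxpos i0).ne']
        rw [h5]; exact h6
      have hest : ‖z‖ * ‖v i0‖ ≤ c * ‖v i0‖ := by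
        have e1 : ‖z‖ * ‖v i0‖ = ‖∑ k, (M i0 k : ℂ) * v k‖ := by
          rw [hvz i0, norm_mul]
        have e2 : ‖∑ k, (M i0 k : ℂ) * v k‖ ≤ ∑ k, M i0 k * ‖v k‖ := by
          refine (norm_sum_le _ _).trans ?_
          refine Finset.sum_le_sum fun k _ => ?_
          rw [norm_mul, Complex.norm_real, Real.norm_eq_abs, abs_of_nonneg (hM0 i0 k)]
        have e3 : ∑ k, M i0 k * ‖v k‖ ≤ r * ∑ k, M i0 k * x k := by
          rw [Finset.mul_sum]
          refine Finset.sum_le_sum fun k _ => ?_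
          calc M i0 k * ‖v k‖ ≤ M i0 k * (r * x k) :=
                mul_le_mul_of_nonneg_left (hvk k) (hM0 i0 k)
            _ = r * (M i0 k * x k) := by ring
        have e4 : r * ∑ k, M i0 k * x k ≤ r * (c * x i0) := by
          refine mul_le_mul_of_nonneg_left (hcx i0) ?_
          exact div_nonneg (norm_nonneg _) (hxpos i0).le
        have e5 : r * (c * x i0) = c * ‖v i0‖ := by
          rw [hrdef]
          field_simp [(hxpos i0).ne']
        linarith
      exact le_of_mul_le_mul_right (by linarith) hrpos
    have hc0 : 0 ≤ c := by
      obtain ⟨i⟩ := hne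
      refine le_trans ?_ (Finset.le_sup' (fun i => (∑ k, M i k * x k) / x i) (Finset.mem_univ i))
      exact div_nonneg (Finset.sum_nonneg fun k _ => mul_nonneg (hM0 i k) (hxpos k).le)
        (hxpos i).le
    have hbound : specRad M ≤ (c.toNNReal : ENNReal) := by
      rw [specRad, spectralRadius]
      refine iSup₂_le fun z hz => ?_
      rw [ENNReal.coe_le_coe, ← norm_toNNReal]
      exact Real.toNNReal_mono (key z hz)
    refine lt_of_le_of_lt hbound ?_
    rw [← ENNReal.coe_one, ENNReal.coe_lt_coe]
    rw [← Real.toNNReal_one]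
    exact (Real.toNNReal_lt_toNNReal_iff one_pos).2 hc1
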